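/- For each d ≥ 1 let m = 2^d and define C(d) = d · h_b(m/(6(m−1))) − H(p̃^{(d)}), where p̃^{(d)} is the probability vector with m−1 entries equal to 1/(3(m−1)) and one entry equal to 2/3, and H(p̃^{(d)}) = (1/3) log₂(3(m−1)) + (2/3) log₂(3/2) is its entropy. Then lim_{d→∞} [ C(d) − d · (h_b(1/6) − 1/3) ] = −h_b(1/3). In particular, since h_b(1/6) − 1/3 > 0, the quantity C(d) grows linearly in d = log₂ m, so the worst-case gap between the minimal sum of marginal bit entropies over bijections and the joint entropy is Θ(log m). -/

import Mathlib

open Filter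

/-- The binary entropy function `h_b(x) = -x log₂ x - (1-x) log₂ (1-x)`
(with the convention `0 log₂ 0 = 0`, which `Real.logb` satisfies). -/
noncomputable def binEnt (x : ℝ) : ℝ :=
  -(x * Real.logb 2 x) - (1 - x) * Real.logb 2 (1 - x)

/-- `C(d) = d·h_b(m/(6(m-1))) - H(p̃^{(d)})` with `m = 2^d` and
`H(p̃^{(d)}) = (1/3)log₂(3(m-1)) + (2/3)log₂(3/2)`. -/
noncomputable def worstCaseGap (d : ℕ) : ℝ :=
  (d : ℝ) * binEnt ((2 ^ d : ℝ) / (6 * ((2 ^ d : ℝ) - 1)))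
    - ((1 / 3) * Real.logb 2 (3 * ((2 ^ d : ℝ) - 1)) + (2 / 3) * Real.logb 2 (3 / 2))

lemma binEnt_eq (x : ℝ) :
    binEnt x = (-(x * Real.log x) - (1 - x) * Real.log (1 - x)) * (Real.log 2)⁻¹ := by
  unfold binEnt Real.logb
  ring

lemma hasDerivAt_binEnt :
    HasDerivAt binEnt (Real.log 5 * (Real.log 2)⁻¹) (1 / 6) := by
  have h1 : HasDerivAt (fun x : ℝ => x * Real.log x) (Real.log (1 / 6) + 1) (1 / 6) :=
    Real.hasDerivAt_mul_log (by norm_num)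
  have ha : HasDerivAt (fun x : ℝ => 1 - x) (-1) (1 / 6) := by
    simpa using (hasDerivAt_id (1 / 6 : ℝ)).const_sub 1
  have hb : HasDerivAt (fun y : ℝ => y * Real.log y) (Real.log (5 / 6) + 1)
      ((fun x : ℝ => 1 - x) (1 / 6)) := by
    norm_num
    exact Real.hasDerivAt_mul_log (by norm_num)
  have h2 : HasDerivAt (fun x : ℝ => (1 - x) * Real.log (1 - x))
      ((Real.log (5 / 6) + 1) * (-1)) (1 / 6) := hb.comp (1 / 6 : ℝ) ha
  have hF : HasDerivAt (fun x : ℝ => -(x * Real.log x) - (1 - x) * Real.log (1 - x))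
      (-(Real.log (1 / 6) + 1) - (Real.log (5 / 6) + 1) * (-1)) (1 / 6) := h1.neg.sub h2
  have hd : -(Real.log (1 / 6) + 1) - (Real.log (5 / 6) + 1) * (-1) = Real.log 5 := by
    rw [show (1 / 6 : ℝ) = 6⁻¹ by norm_num, Real.log_inv,
      Real.log_div (by norm_num) (by norm_num)]
    ring
  rw [hd] at hF
  have : binEnt = fun x : ℝ =>
      (-(x * Real.log x) - (1 - x) * Real.log (1 - x)) * (Real.log 2)⁻¹ :=
    funext binEnt_eq
  rw [this]
  exact hF.mul_const _

lemma two_pow_sub_one_pos {d : ℕ} (hd : 1 ≤ d) : (0 : ℝ) < (2 : ℝ) ^ d - 1 := by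
  have h2 : (2 : ℝ) ^ 1 ≤ (2 : ℝ) ^ d := pow_le_pow_right₀ (by norm_num) hd
  rw [pow_one] at h2; linarith

lemma half_pow_le {d : ℕ} (hd : 1 ≤ d) : ((1 : ℝ) / 2) ^ d ≤ 1 / 2 := by
  have h2 : ((1 : ℝ) / 2) ^ d ≤ ((1 : ℝ) / 2) ^ 1 :=
    pow_le_pow_of_le_one (by norm_num) (by norm_num) hd
  rwa [pow_one] at h2

lemma one_sub_half_pow_pos {d : ℕ} (hd : 1 ≤ d) : (0 : ℝ) < 1 - (1 / 2 : ℝ) ^ d := by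
  have := half_pow_le hd; linarith

lemma xd_eq {d : ℕ} (hd : 1 ≤ d) :
    (2 ^ d : ℝ) / (6 * ((2 ^ d : ℝ) - 1)) = 1 / (6 * (1 - (1 / 2 : ℝ) ^ d)) := by
  have h1 : (0 : ℝ) < (2 : ℝ) ^ d - 1 := two_pow_sub_one_pos hd
  have h2 : (0 : ℝ) < (2 : ℝ) ^ d := by positivity
  rw [div_eq_div_iff (by positivity) (by
    have := one_sub_half_pow_pos hd; positivity)]
  have : ((1 : ℝ) / 2) ^ d = ((2 : ℝ) ^ d)⁻¹ := by
    rw [one_div, inv_pow]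
  rw [this]
  field_simp

/-- `d * (1/2)^d → 0`. -/
lemma dt_lim : Tendsto (fun d : ℕ => (d : ℝ) * (1 / 2 : ℝ) ^ d) atTop (nhds 0) :=
  tendsto_self_mul_const_pow_of_lt_one (by norm_num) (by norm_num)

lemma t_lim : Tendsto (fun d : ℕ => ((1 : ℝ) / 2) ^ d) atTop (nhds 0) :=
  tendsto_pow_atTop_nhds_zero_of_lt_one (by norm_num) (by norm_num)

lemma denom_lim : Tendsto (fun d : ℕ => (6 * (1 - (1 / 2 : ℝ) ^ d))⁻¹) atTop (nhds (1 / 6)) := by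
  have h : Tendsto (fun d : ℕ => 6 * (1 - (1 / 2 : ℝ) ^ d)) atTop (nhds 6) := by
    have h1 : Tendsto (fun d : ℕ => 1 - (1 / 2 : ℝ) ^ d) atTop (nhds 1) := by
      simpa using (tendsto_const_nhds (x := (1:ℝ))).sub t_lim
    simpa using h1.const_mul (6 : ℝ)
  have := h.inv₀ (by norm_num)
  simpa using this

theorem worstCaseGap_asymptotics :
    Tendsto (fun d : ℕ => worstCaseGap d - (d : ℝ) * (binEnt (1 / 6) - 1 / 3))
        atTop (nhds (-binEnt (1 / 3)))
      ∧ 0 < binEnt (1 / 6) - 1 / 3 := by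
  have hlog2 : (0 : ℝ) < Real.log 2 := Real.log_pos (by norm_num)
  constructor
  · -- the limit
    set c : ℝ := Real.log 5 * (Real.log 2)⁻¹ with hc
    set X : ℕ → ℝ := fun d => (2 ^ d : ℝ) / (6 * ((2 ^ d : ℝ) - 1)) with hX
    have hXeq : ∀ᶠ d in atTop, X d = 1 / (6 * (1 - (1 / 2 : ℝ) ^ d)) :=
      eventually_atTop.2 ⟨1, fun d hd => xd_eq hd⟩
    have hXlim : Tendsto X atTop (nhds (1 / 6)) := by
      have h0 : Tendsto (fun d : ℕ => 1 / (6 * (1 - (1 / 2 : ℝ) ^ d))) atTop (nhds (1 / 6)) := by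
        simpa [one_div] using denom_lim
      exact h0.congr' (hXeq.mono fun d h => h.symm)
    have hXne : ∀ᶠ d in atTop, X d ≠ 1 / 6 := by
      refine eventually_atTop.2 ⟨1, fun d hd => ?_⟩
      have ht : (0 : ℝ) < (1 / 2 : ℝ) ^ d := by positivity
      have h1 : (0 : ℝ) < 1 - (1 / 2 : ℝ) ^ d := one_sub_half_pow_pos hd
      rw [hX]
      simp only
      rw [xd_eq hd]
      intro h
      rw [div_eq_div_iff (by positivity) (by norm_num)] at h
      nlinarith
    have hXnhds : Tendsto X atTop (nhdsWithin (1 / 6) {(1 / 6 : ℝ)}ᶜ) := by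
      rw [tendsto_nhdsWithin_iff]
      exact ⟨hXlim, hXne.mono fun d h => by simpa using h⟩
    have hslope : Tendsto (fun d : ℕ => slope binEnt (1 / 6) (X d)) atTop (nhds c) :=
      (hasDerivAt_iff_tendsto_slope.mp hasDerivAt_binEnt).comp hXnhds
    have hdx : Tendsto (fun d : ℕ => (d : ℝ) * (X d - 1 / 6)) atTop (nhds 0) := by
      have h0 : Tendsto
          (fun d : ℕ => ((d : ℝ) * (1 / 2 : ℝ) ^ d) * (6 * (1 - (1 / 2 : ℝ) ^ d))⁻¹)
          atTop (nhds 0) := by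
        simpa using dt_lim.mul denom_lim
      refine h0.congr' ?_
      refine eventually_atTop.2 ⟨1, fun d hd => ?_⟩
      have h1 : (0 : ℝ) < 1 - (1 / 2 : ℝ) ^ d := one_sub_half_pow_pos hd
      rw [hX]; simp only; rw [xd_eq hd]
      generalize ((1 : ℝ) / 2) ^ d = u at h1 ⊢
      have hu : (1 : ℝ) - u ≠ 0 := ne_of_gt h1
      field_simp
      ring
    have key1 : Tendsto (fun d : ℕ => (d : ℝ) * (binEnt (X d) - binEnt (1 / 6)))
        atTop (nhds 0) := by
      have h0 := hslope.mul hdx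
      rw [mul_zero] at h0
      refine h0.congr' (hXne.mono fun d hne => ?_)
      simp only
      set y := X d with hy
      clear_value y
      have hsub : y - 1 / 6 ≠ 0 := sub_ne_zero.2 hne
      rw [slope_def_field]
      rw [show (binEnt y - binEnt (1 / 6)) / (y - 1 / 6) * ((d : ℝ) * (y - 1 / 6))
          = (d : ℝ) * ((binEnt y - binEnt (1 / 6)) / (y - 1 / 6) * (y - 1 / 6)) by ring,
        div_mul_cancel₀ _ hsub]
    have key2 : Tendsto (fun d : ℕ => Real.logb 2 (1 - (1 / 2 : ℝ) ^ d)) atTop (nhds 0) := by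
      have h1 : Tendsto (fun d : ℕ => 1 - (1 / 2 : ℝ) ^ d) atTop (nhds 1) := by
        simpa using (tendsto_const_nhds (x := (1 : ℝ))).sub t_lim
      have h2 : Tendsto (fun d : ℕ => Real.log (1 - (1 / 2 : ℝ) ^ d)) atTop (nhds 0) := by
        have := (Real.continuousAt_log (by norm_num : (1 : ℝ) ≠ 0)).tendsto.comp h1
        simpa [Function.comp_def] using this
      have h3 := h2.div_const (Real.log 2)
      rw [zero_div] at h3
      exact h3
    have hfinal : Tendsto
        (fun d : ℕ => (d : ℝ) * (binEnt (X d) - binEnt (1 / 6))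
          + (-(1 / 3) * Real.logb 2 (1 - (1 / 2 : ℝ) ^ d)) + (-binEnt (1 / 3)))
        atTop (nhds (-binEnt (1 / 3))) := by
      have := (key1.add (key2.const_mul (-(1 / 3 : ℝ)))).add
        (tendsto_const_nhds (x := (-binEnt (1 / 3) : ℝ)))
      simpa using this
    refine hfinal.congr' ?_
    refine eventually_atTop.2 ⟨1, fun d hd => ?_⟩
    -- rewrite logb identities
    have h1 : (0 : ℝ) < 1 - (1 / 2 : ℝ) ^ d := one_sub_half_pow_pos hd
    have h2 : (0 : ℝ) < (2 : ℝ) ^ d := by positivity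
    have hpow : ((1 : ℝ) / 2) ^ d = ((2 : ℝ) ^ d)⁻¹ := by rw [one_div, inv_pow]
    have hsplit : (3 : ℝ) * ((2 : ℝ) ^ d - 1)
        = 3 * ((2 : ℝ) ^ d * (1 - (1 / 2 : ℝ) ^ d)) := by
      rw [hpow]; field_simp
    have hA : Real.logb 2 (3 * ((2 : ℝ) ^ d - 1))
        = Real.logb 2 3 + (d : ℝ) + Real.logb 2 (1 - (1 / 2 : ℝ) ^ d) := by
      rw [hsplit, Real.logb_mul (by norm_num) (by positivity),
        Real.logb_mul (by positivity) (by positivity), Real.logb_pow,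
        Real.logb_self_eq_one (by norm_num)]
      ring
    have hB : Real.logb 2 ((3 : ℝ) / 2) = Real.logb 2 3 - 1 := by
      rw [Real.logb_div (by norm_num) (by norm_num), Real.logb_self_eq_one (by norm_num)]
    have hC : binEnt (1 / 3) = Real.logb 2 3 - 2 / 3 := by
      unfold binEnt
      rw [show (1 / 3 : ℝ) = (3 : ℝ)⁻¹ by norm_num, Real.logb_inv,
        show (1 - (3 : ℝ)⁻¹ : ℝ) = 2 / 3 by norm_num,
        Real.logb_div (by norm_num) (by norm_num), Real.logb_self_eq_one (by norm_num)]
      ring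
    unfold worstCaseGap
    rw [hX]
    simp only
    rw [hA, hB, hC]
    ring
  · -- positivity
    have key : 2 * Real.log 2 < 6 * Real.log 6 - 5 * Real.log 5 := by
      have h1 : Real.log 12500 < Real.log 46656 :=
        Real.log_lt_log (by norm_num) (by norm_num)
      have h2 : Real.log (46656 : ℝ) = 6 * Real.log 6 := by
        rw [show (46656 : ℝ) = 6 ^ 6 by norm_num, Real.log_pow]; norm_num
      have h3 : Real.log (12500 : ℝ) = 5 * Real.log 5 + 2 * Real.log 2 := by
        rw [show (12500 : ℝ) = 5 ^ 5 * 2 ^ 2 by norm_num,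
          Real.log_mul (by norm_num) (by norm_num), Real.log_pow, Real.log_pow]
        norm_num
      rw [h2, h3] at h1
      linarith
    have e1 : Real.log (1 / 6 : ℝ) = -Real.log 6 := by
      rw [show (1 / 6 : ℝ) = (6 : ℝ)⁻¹ by norm_num, Real.log_inv]
    have e2 : Real.log (1 - 1 / 6 : ℝ) = Real.log 5 - Real.log 6 := by
      rw [show (1 - 1 / 6 : ℝ) = 5 / 6 by norm_num, Real.log_div (by norm_num) (by norm_num)]
    unfold binEnt Real.logb
    rw [e1, e2]
    have heq : -(1 / 6 * (-Real.log 6 / Real.log 2))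
        - (1 - 1 / 6) * ((Real.log 5 - Real.log 6) / Real.log 2) - 1 / 3
        = (6 * Real.log 6 - 5 * Real.log 5 - 2 * Real.log 2) / (6 * Real.log 2) := by
      field_simp
      ring
    rw [heq]
    apply div_pos <;> linarith
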